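/- If g_i is bounded above and below on A_i by positive constants g_{i,sup}, g_{i,inf}, then the minimal energy over the constrained class E⁺(A_i, a_i, g_i) = {ν ∈ M⁺(A_i) ∩ E : ∫ g_i dν = a_i} satisfies a_i²/(g_{i,sup}² C(A_i)) ≤ inf{‖ν‖² : ν ∈ E⁺(A_i,a_i,g_i)} ≤ a_i²/(g_{i,inf}² C(A_i)), where C(A_i) = 1/inf{‖ν‖² : ν ∈ M⁺(A_i), ν(X)=1, ν ∈ E} is the interior capacity of A_i. -/

import Mathlib

open MeasureTheory
open scoped ENNReal

/-- Mutual energy of two nonnegative measures w.r.t. the kernel `κ`. -/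
noncomputable def mutualE {X : Type*} [MeasurableSpace X] (κ : X → X → ℝ)
    (ν μ : Measure X) : ℝ :=
  ∫ x, ∫ y, κ x y ∂μ ∂ν

/-- `ν` has finite energy w.r.t. `κ`. -/
def FiniteEnergy {X : Type*} [MeasurableSpace X] (κ : X → X → ℝ) (ν : Measure X) : Prop :=
  ∫⁻ x, ∫⁻ y, ENNReal.ofReal |κ x y| ∂ν ∂ν ≠ ⊤

/-- The minimal energy over `E⁺(A, a, g) = {ν ∈ M⁺(A) ∩ E : ∫ g dν = a}` (in `ℝ≥0∞`). -/
noncomputable def setMinEnergy {X : Type*} [MeasurableSpace X] (κ : X → X → ℝ)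
    (A : Set X) (g : X → ℝ) (a : ℝ) : ℝ≥0∞ :=
  ⨅ (ν : Measure X)
    (_ : ν Aᶜ = 0 ∧ FiniteEnergy κ ν ∧ ∫ x, g x ∂ν = a),
    ENNReal.ofReal (mutualE κ ν ν)

/-- The (interior, Wiener) capacity of `A`:
`C(A) = 1 / inf{‖ν‖² : ν ∈ M⁺(A) ∩ E, ν(X) = 1}`, with the convention `1/0 = ∞`. -/
noncomputable def setCap {X : Type*} [MeasurableSpace X] (κ : X → X → ℝ)
    (A : Set X) : ℝ≥0∞ :=
  (⨅ (ν : Measure X)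
    (_ : ν Aᶜ = 0 ∧ FiniteEnergy κ ν ∧ ν Set.univ = 1),
    ENNReal.ofReal (mutualE κ ν ν))⁻¹

lemma mutualE_smul {X : Type*} [MeasurableSpace X] (κ : X → X → ℝ)
    (ν : Measure X) (c : ℝ≥0∞) :
    mutualE κ (c • ν) (c • ν) = c.toReal ^ 2 * mutualE κ ν ν := by
  simp only [mutualE, integral_smul_measure, smul_eq_mul]
  rw [integral_const_mul]
  ring

lemma FiniteEnergy.smul {X : Type*} [MeasurableSpace X] {κ : X → X → ℝ}
    {ν : Measure X} (h : FiniteEnergy κ ν) {c : ℝ≥0∞} (hc : c ≠ ⊤) :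
    FiniteEnergy κ (c • ν) := by
  unfold FiniteEnergy at h ⊢
  simp only [lintegral_smul_measure, smul_eq_mul]
  rw [lintegral_const_mul' _ _ hc]
  exact ENNReal.mul_ne_top hc (ENNReal.mul_ne_top hc h)

/-- If `0 < g_inf ≤ g ≤ g_sup < ∞` on `A`, then
`a²/(g_sup² C(A)) ≤ inf{‖ν‖² : ν ∈ E⁺(A,a,g)} ≤ a²/(g_inf² C(A))`. -/
theorem setMinEnergy_estimates {X : Type*} [TopologicalSpace X] [MeasurableSpace X]
    [BorelSpace X]
    (κ : X → X → ℝ) (hκsym : ∀ x y, κ x y = κ y x)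
    (hκpd : ∀ ν₁ ν₂ : Measure X,
      0 ≤ mutualE κ ν₁ ν₁ - 2 * mutualE κ ν₁ ν₂ + mutualE κ ν₂ ν₂)
    (A : Set X) (hA : IsClosed A)
    (g : X → ℝ) (hg : Continuous g)
    (ginf gsup : ℝ) (hginf : 0 < ginf)
    (hbounds : ∀ x ∈ A, ginf ≤ g x ∧ g x ≤ gsup)
    (a : ℝ) (ha : 0 < a) :
    ENNReal.ofReal (a ^ 2 / gsup ^ 2) / setCap κ A ≤ setMinEnergy κ A g a ∧
      setMinEnergy κ A g a ≤ ENNReal.ofReal (a ^ 2 / ginf ^ 2) / setCap κ A := by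
  classical
  have hEnonneg : ∀ ν : Measure X, 0 ≤ mutualE κ ν ν := by
    intro ν
    have h := hκpd ν 0
    simpa [mutualE] using h
  set W : ℝ≥0∞ := ⨅ (ν : Measure X)
      (_ : ν Aᶜ = 0 ∧ FiniteEnergy κ ν ∧ ν Set.univ = 1),
      ENNReal.ofReal (mutualE κ ν ν) with hW
  have hdiv : ∀ r : ℝ, ENNReal.ofReal r / setCap κ A = ENNReal.ofReal r * W := by
    intro r
    rw [setCap, div_eq_mul_inv, inv_inv]
  constructor
  · -- lower bound
    rw [hdiv, setMinEnergy]
    refine le_iInf fun μ => le_iInf fun hμ => ?_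
    obtain ⟨hsupp, hFE, hint⟩ := hμ
    have hgi : Integrable g μ := by
      by_contra h
      rw [integral_undef h] at hint
      exact ha.ne' hint.symm
    have hae : ∀ᵐ x ∂μ, x ∈ A := mem_ae_iff.mpr hsupp
    have hμne : μ ≠ 0 := by
      intro h
      rw [h] at hint
      simp at hint
      exact ha.ne' hint.symm
    have hAne : A.Nonempty := by
      rcases Set.eq_empty_or_nonempty A with h | h
      · exfalso
        apply hμne
        have h0 : μ Set.univ = 0 := by simpa [h] using hsupp
        exact Measure.measure_univ_eq_zero.mp h0
      · exact h
    obtain ⟨x₀, hx₀⟩ := hAne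
    have hgsup : 0 < gsup :=
      lt_of_lt_of_le hginf (le_trans (hbounds x₀ hx₀).1 (hbounds x₀ hx₀).2)
    have hfin : μ Set.univ ≠ ⊤ := by
      intro htop
      have h1 : ENNReal.ofReal ginf * μ Set.univ ≤ ∫⁻ x, ‖g x‖₊ ∂μ := by
        rw [← lintegral_const]
        refine lintegral_mono_ae ?_
        filter_upwards [hae] with x hx
        calc ENNReal.ofReal ginf ≤ ENNReal.ofReal (g x) :=
              ENNReal.ofReal_le_ofReal (hbounds x hx).1
          _ ≤ ‖g x‖₊ := Real.ofReal_le_enorm _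
      have h2 : ∫⁻ x, ‖g x‖₊ ∂μ < ⊤ := hgi.2
      rw [htop, ENNReal.mul_top (ENNReal.ofReal_pos.mpr hginf).ne'] at h1
      exact absurd (lt_of_le_of_lt h1 h2) (lt_irrefl ⊤)
    haveI : IsFiniteMeasure μ := ⟨lt_top_iff_ne_top.mpr hfin⟩
    set m : ℝ := (μ Set.univ).toReal with hm
    have hμ0 : μ Set.univ ≠ 0 := fun h => hμne (Measure.measure_univ_eq_zero.mp h)
    have hmpos : 0 < m := ENNReal.toReal_pos hμ0 hfin
    have hale : a ≤ gsup * m := by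
      have hmono : ∫ x, g x ∂μ ≤ ∫ _, gsup ∂μ :=
        integral_mono_ae hgi (integrable_const _)
          (by filter_upwards [hae] with x hx; exact (hbounds x hx).2)
      rw [hint, integral_const, smul_eq_mul] at hmono
      rw [show μ.real Set.univ = m from rfl] at hmono
      linarith
    set ν : Measure X := (μ Set.univ)⁻¹ • μ with hν
    have hνmem : ν Aᶜ = 0 ∧ FiniteEnergy κ ν ∧ ν Set.univ = 1 := by
      refine ⟨?_, hFE.smul (ENNReal.inv_ne_top.mpr hμ0), ?_⟩
      · simp [hν, hsupp]
      · simp [hν, ENNReal.inv_mul_cancel hμ0 hfin]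
    have hWle : W ≤ ENNReal.ofReal (mutualE κ ν ν) := by
      rw [hW]
      exact iInf₂_le ν hνmem
    have hEν : mutualE κ ν ν = m⁻¹ ^ 2 * mutualE κ μ μ := by
      rw [hν, mutualE_smul, ENNReal.toReal_inv]
    calc ENNReal.ofReal (a ^ 2 / gsup ^ 2) * W
        ≤ ENNReal.ofReal (a ^ 2 / gsup ^ 2) * ENNReal.ofReal (mutualE κ ν ν) :=
          mul_le_mul_right hWle _
      _ = ENNReal.ofReal (a ^ 2 / gsup ^ 2 * mutualE κ ν ν) :=
          (ENNReal.ofReal_mul (by positivity)).symm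
      _ ≤ ENNReal.ofReal (mutualE κ μ μ) := by
          apply ENNReal.ofReal_le_ofReal
          rw [hEν]
          have hEμ := hEnonneg μ
          have h1 : a ^ 2 / gsup ^ 2 ≤ m ^ 2 := by
            rw [div_le_iff₀ (by positivity)]
            nlinarith
          calc a ^ 2 / gsup ^ 2 * (m⁻¹ ^ 2 * mutualE κ μ μ)
              ≤ m ^ 2 * (m⁻¹ ^ 2 * mutualE κ μ μ) :=
                mul_le_mul_of_nonneg_right h1 (by positivity)
            _ = mutualE κ μ μ := by field_simp
  · -- upper bound
    rw [hdiv]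
    set c := ENNReal.ofReal (a ^ 2 / ginf ^ 2) with hc
    have hc0 : c ≠ 0 := (ENNReal.ofReal_pos.mpr (by positivity)).ne'
    have hct : c ≠ ⊤ := ENNReal.ofReal_ne_top
    rw [mul_comm, ← ENNReal.div_le_iff hc0 hct, hW]
    refine le_iInf fun ν => le_iInf fun hν => ?_
    obtain ⟨hsupp, hFE, hmass⟩ := hν
    rw [ENNReal.div_le_iff hc0 hct]
    haveI : IsFiniteMeasure ν := ⟨by rw [hmass]; exact ENNReal.one_lt_top⟩
    have hae : ∀ᵐ x ∂ν, x ∈ A := mem_ae_iff.mpr hsupp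
    have hgi : Integrable g ν := by
      refine Integrable.mono' (integrable_const gsup) hg.aestronglyMeasurable ?_
      filter_upwards [hae] with x hx
      rw [Real.norm_eq_abs, abs_of_pos (lt_of_lt_of_le hginf (hbounds x hx).1)]
      exact (hbounds x hx).2
    set b := ∫ x, g x ∂ν with hb
    have hb1 : ginf ≤ b := by
      have hmono : ∫ _, ginf ∂ν ≤ ∫ x, g x ∂ν :=
        integral_mono_ae (integrable_const _) hgi
          (by filter_upwards [hae] with x hx; exact (hbounds x hx).1)
      simpa [integral_const, hmass, Measure.real] using hmono
    have hbpos : 0 < b := lt_of_lt_of_le hginf hb1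
    set s : ℝ := a / b with hs
    have hspos : 0 < s := div_pos ha hbpos
    set μ : Measure X := ENNReal.ofReal s • ν with hμ
    have hμmem : μ Aᶜ = 0 ∧ FiniteEnergy κ μ ∧ ∫ x, g x ∂μ = a := by
      refine ⟨by simp [hμ, hsupp], hFE.smul ENNReal.ofReal_ne_top, ?_⟩
      rw [hμ, integral_smul_measure, ENNReal.toReal_ofReal hspos.le, smul_eq_mul, ← hb, hs]
      field_simp
    have hMle : setMinEnergy κ A g a ≤ ENNReal.ofReal (mutualE κ μ μ) := iInf₂_le μ hμmem
    have hsle : s ≤ a / ginf := by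
      rw [hs, div_le_div_iff₀ hbpos hginf]
      nlinarith
    calc setMinEnergy κ A g a ≤ ENNReal.ofReal (mutualE κ μ μ) := hMle
      _ = ENNReal.ofReal (s ^ 2 * mutualE κ ν ν) := by
          rw [hμ, mutualE_smul, ENNReal.toReal_ofReal hspos.le]
      _ ≤ ENNReal.ofReal (mutualE κ ν ν * (a ^ 2 / ginf ^ 2)) := by
          apply ENNReal.ofReal_le_ofReal
          have h2 : s ^ 2 ≤ a ^ 2 / ginf ^ 2 := by
            rw [← div_pow]
            exact pow_le_pow_left₀ hspos.le hsle 2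
          calc s ^ 2 * mutualE κ ν ν ≤ a ^ 2 / ginf ^ 2 * mutualE κ ν ν :=
                mul_le_mul_of_nonneg_right h2 (hEnonneg ν)
            _ = mutualE κ ν ν * (a ^ 2 / ginf ^ 2) := mul_comm _ _
      _ = ENNReal.ofReal (mutualE κ ν ν) * c :=
          ENNReal.ofReal_mul' (by positivity)
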